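/- Let $G: [r_+, \infty) \to \mathbb{R}$ be continuous and compactly supported, and for constants $M > 0$, $|a| < M$ set $\Delta(r) = (r - r_+)(r - r_-)$ with $r_\pm = M \pm \sqrt{M^2 - a^2}$. Define $Q = \int_{r_+}^{\infty} G(\rho)\, d\rho$ and $\psi(\rho) = -\int_{\rho}^{\infty} \Delta(\rho_1)^{-1} \int_{r_+}^{\rho_1} G(\rho_2)\, d\rho_2\, d\rho_1$ for $\rho > r_+$. Then as $\rho \to \infty$: $(r^2+a^2)^{1/2}\psi(\rho) = -Q\,(1 + M\rho^{-1}) + \frac{1}{2}\big(\lim_{\rho' \to \infty}\rho' G(\rho')\big)\rho^{-1} + O(\rho^{-2})$ and $\rho^2 \frac{d}{d\rho}\big((r^2+a^2)^{1/2}\psi\big)(\rho) = M Q - \frac{1}{2}\lim_{\rho'\to\infty}\rho' G(\rho') + O(\rho^{-1})$; in particular, since $G$ is compactly supported the limit term vanishes and $\lim_{\rho\to\infty} \rho^2 \frac{d}{d\rho}\big((r^2+a^2)^{1/2}\psi\big) = M Q$. -/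

import Mathlib

open MeasureTheory Filter

lemma log_taylor2 {y : ℝ} (h0 : 0 < y) (h2 : y ≤ 1/2) :
    |Real.log (1 + y) - y + y ^ 2 / 2| ≤ 2 * y ^ 3 := by
  have h := Real.abs_log_sub_add_sum_range_le (x := -y) (by rw [abs_neg, abs_of_pos h0]; linarith) 2
  rw [abs_neg, abs_of_pos h0] at h
  simp only [Finset.sum_range_succ, Finset.sum_range_zero] at h
  norm_num at h


  have e2 : -y + y ^ 2 / 2 + Real.log (1+y) = Real.log (1 + y) - y + y ^ 2 / 2 := by ring
  rw [e2] at h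
  have : y ^ 3 / (1 - y) ≤ 2 * y ^ 3 := by
    rw [div_le_iff₀ (by linarith)]
    nlinarith [pow_pos h0 3]
  linarith [h, this]

lemma sqrt_ub {a ρ : ℝ} (h : 0 < ρ) : Real.sqrt (ρ^2 + a^2) ≤ ρ + a^2/(2*ρ) := by
  have key : (ρ + a^2/(2*ρ))^2 = ρ^2 + a^2 + (a^2/(2*ρ))^2 := by field_simp; ring
  have h1 : ρ^2 + a^2 ≤ (ρ + a^2/(2*ρ))^2 := by
    rw [key]; nlinarith [sq_nonneg (a^2/(2*ρ))]
  calc Real.sqrt (ρ^2+a^2) ≤ Real.sqrt ((ρ + a^2/(2*ρ))^2) := Real.sqrt_le_sqrt h1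
    _ = ρ + a^2/(2*ρ) := Real.sqrt_sq (by positivity)

lemma sqrt_lb {a ρ : ℝ} (h : 0 ≤ ρ) : ρ ≤ Real.sqrt (ρ^2 + a^2) := by
  calc ρ = Real.sqrt (ρ^2) := (Real.sqrt_sq h).symm
    _ ≤ Real.sqrt (ρ^2 + a^2) := Real.sqrt_le_sqrt (by nlinarith [sq_nonneg a])

lemma psi_formula (B r : ℝ) (hrB : r < B) (G : ℝ → ℝ) (hGint : Integrable G)
    (R₀ : ℝ) (hR₀B : B < R₀) (hGz : ∀ x, R₀ ≤ x → G x = 0) (ρ : ℝ) (hρ : R₀ ≤ ρ) :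
    -∫ ρ₁ in Set.Ioi ρ, ((ρ₁ - B) * (ρ₁ - r))⁻¹ * ∫ ρ₂ in B..ρ₁, G ρ₂
      = (∫ x in Set.Ioi B, G x) * ((Real.log (ρ - B) - Real.log (ρ - r)) / (B - r)) := by
  have hd : 0 < B - r := by linarith
  have hBρ : B < ρ := lt_of_lt_of_le hR₀B hρ
  set g : ℝ → ℝ := fun x => (Real.log (x - B) - Real.log (x - r)) / (B - r) with hg
  have hderiv : ∀ x ∈ Set.Ici ρ, HasDerivAt g (((x - B) * (x - r))⁻¹) x := by
    intro x hx
    have hxB : B < x := lt_of_lt_of_le hBρ hx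
    have hxr : r < x := lt_trans hrB hxB
    have h1 : HasDerivAt (fun y : ℝ => Real.log (y - B)) (1 / (x - B)) x :=
      ((hasDerivAt_id x).sub_const B).log (sub_ne_zero.2 hxB.ne')
    have h2 : HasDerivAt (fun y : ℝ => Real.log (y - r)) (1 / (x - r)) x :=
      ((hasDerivAt_id x).sub_const r).log (sub_ne_zero.2 hxr.ne')
    have h3 := (h1.sub h2).div_const (B - r)
    have heq : (1 / (x - B) - 1 / (x - r)) / (B - r) = ((x - B) * (x - r))⁻¹ := by
      have n1 : x - B ≠ 0 := sub_ne_zero.2 hxB.ne'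
      have n2 : x - r ≠ 0 := sub_ne_zero.2 hxr.ne'
      field_simp
      ring
    rw [heq] at h3
    exact h3
  have htend : Tendsto g atTop (nhds 0) := by
    have h1 : Tendsto (fun x : ℝ => 1 + (r - B) / (x - r)) atTop (nhds 1) := by
      have hdd : Tendsto (fun x : ℝ => (r - B) / (x - r)) atTop (nhds 0) :=
        Tendsto.div_atTop tendsto_const_nhds (tendsto_atTop_add_const_right atTop (-r) tendsto_id)
      simpa using tendsto_const_nhds.add hdd
    have hlog : Tendsto (fun x : ℝ => Real.log (1 + (r - B) / (x - r))) atTop (nhds 0) := by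
      have := (Real.continuousAt_log one_ne_zero).tendsto.comp h1
      simpa [Function.comp_def] using this
    have h2 : Tendsto (fun x : ℝ => Real.log (1 + (r - B) / (x - r)) / (B - r)) atTop (nhds 0) := by
      simpa using hlog.div_const (B - r)
    apply Tendsto.congr' _ h2
    filter_upwards [eventually_gt_atTop B] with x hx
    have hxB : (0:ℝ) < x - B := by linarith
    have hxr : (0:ℝ) < x - r := by linarith
    have heq : 1 + (r - B) / (x - r) = (x - B) / (x - r) := by field_simp; ring
    rw [heq, Real.log_div hxB.ne' hxr.ne']
  have hint : (∫ x in Set.Ioi ρ, ((x - B) * (x - r))⁻¹) = 0 - g ρ := by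
    apply integral_Ioi_of_hasDerivAt_of_nonneg' hderiv _ htend
    intro x hx
    have hxB : B < x := lt_trans hBρ hx
    have hxr : r < x := lt_trans hrB hxB
    exact inv_nonneg.2 (le_of_lt (mul_pos (by linarith) (by linarith)))
  have hinner : ∀ ρ₁ ∈ Set.Ioi ρ, (∫ ρ₂ in B..ρ₁, G ρ₂) = ∫ x in Set.Ioi B, G x := by
    intro ρ₁ hρ₁
    rw [Set.mem_Ioi] at hρ₁
    have hBρ₁ : B ≤ ρ₁ := le_of_lt (lt_trans hBρ hρ₁)
    rw [intervalIntegral.integral_of_le hBρ₁]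
    have hz : (∫ x in Set.Ioi ρ₁, G x) = 0 := by
      rw [setIntegral_congr_fun measurableSet_Ioi
        (fun x hx => hGz x (le_trans hρ (le_of_lt (lt_trans hρ₁ hx)))), integral_zero]
    have hsplit := setIntegral_union (Set.Ioc_disjoint_Ioi le_rfl) measurableSet_Ioi
      (hGint.integrableOn (s := Set.Ioc B ρ₁)) (hGint.integrableOn (s := Set.Ioi ρ₁))
    rw [Set.Ioc_union_Ioi_eq_Ioi hBρ₁] at hsplit
    rw [hsplit, hz, add_zero]
  calc -∫ ρ₁ in Set.Ioi ρ, ((ρ₁ - B) * (ρ₁ - r))⁻¹ * ∫ ρ₂ in B..ρ₁, G ρ₂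
      = -∫ ρ₁ in Set.Ioi ρ, ((ρ₁ - B) * (ρ₁ - r))⁻¹ * ∫ x in Set.Ioi B, G x := by
        rw [setIntegral_congr_fun measurableSet_Ioi (fun x hx => by rw [hinner x hx])]
    _ = -((∫ ρ₁ in Set.Ioi ρ, ((ρ₁ - B) * (ρ₁ - r))⁻¹) * ∫ x in Set.Ioi B, G x) := by
        rw [integral_mul_const]
    _ = -((0 - g ρ) * ∫ x in Set.Ioi B, G x) := by rw [hint]
    _ = (∫ x in Set.Ioi B, G x) * g ρ := by ring

set_option maxHeartbeats 1000000 in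
lemma est_val (M σ a ρ : ℝ) (hM : 0 < M) (hσ : 0 < σ) (hσM : σ ≤ M) (hρ : 8*M+8 ≤ ρ) :
    |Real.sqrt (ρ^2+a^2) * ((Real.log (ρ-(M+σ)) - Real.log (ρ-(M-σ)))/(2*σ)) + (1 + M/ρ)|
      ≤ (a^2 + 64*σ^2 + 2*(M+σ)^2 + 8*σ*(M+σ)) / ρ^2 := by
  have hρ0 : 0 < ρ := by linarith
  have hhalf : ρ/2 ≤ ρ - (M+σ) := by linarith
  have hBpos : 0 < ρ - (M+σ) := by linarith
  set y := 2*σ/(ρ-(M+σ)) with hy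
  have hy0 : 0 < y := by positivity
  have hy2 : y ≤ 1/2 := by rw [hy, div_le_iff₀ hBpos]; linarith
  have hyρ : y ≤ 4*σ/ρ := by rw [hy, div_le_div_iff₀ hBpos hρ0]; nlinarith
  have hmul : ρ - (M-σ) = (ρ-(M+σ))*(1+y) := by rw [hy]; field_simp; ring
  have hlog : Real.log (ρ-(M-σ)) = Real.log (ρ-(M+σ)) + Real.log (1+y) := by
    rw [hmul, Real.log_mul hBpos.ne' (by positivity)]
  set ℓ := Real.log (1+y) with hℓ
  have hℓ0 : 0 ≤ ℓ := Real.log_nonneg (by linarith)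
  have hℓy : ℓ ≤ y := by
    have := Real.log_le_sub_one_of_pos (show (0:ℝ) < 1+y by linarith)
    simpa using this
  have htay : |ℓ - y + y^2/2| ≤ 2*y^3 := log_taylor2 hy0 hy2
  have hsl : ρ ≤ Real.sqrt (ρ^2+a^2) := sqrt_lb hρ0.le
  have hsu : Real.sqrt (ρ^2+a^2) ≤ ρ + a^2/(2*ρ) := sqrt_ub hρ0
  set s := Real.sqrt (ρ^2+a^2) with hs
  have hgval : (Real.log (ρ-(M+σ)) - Real.log (ρ-(M-σ)))/(2*σ) = -(ℓ/(2*σ)) := by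
    rw [hlog]; ring
  rw [hgval]
  have hdecomp : s * (-(ℓ/(2*σ))) + (1 + M/ρ)
      = (s - ρ)*(-(ℓ/(2*σ))) + (-(ρ*((ℓ - y + y^2/2)/(2*σ))))
        + (-(ρ*(1/(ρ-(M+σ)) - 1/ρ - (M+σ)/ρ^2))) + (ρ*(σ/(ρ-(M+σ))^2 - σ/ρ^2)) := by
    rw [hy]; field_simp; ring
  rw [hdecomp]
  have hℓρ : ℓ * ρ ≤ 4*σ := by
    have h := le_trans hℓy hyρ
    rw [le_div_iff₀ hρ0] at h
    linarith
  have hb0 : |(s - ρ)*(-(ℓ/(2*σ)))| ≤ a^2/ρ^2 := by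
    rw [abs_mul, abs_neg, abs_of_nonneg (show (0:ℝ) ≤ ℓ/(2*σ) by positivity),
      abs_of_nonneg (show (0:ℝ) ≤ s - ρ by linarith)]
    have h1 : s - ρ ≤ a^2/(2*ρ) := by linarith
    have h2 : ℓ/(2*σ) ≤ 2/ρ := by
      rw [div_le_div_iff₀ (by positivity) hρ0]
      linarith
    calc (s-ρ) * (ℓ/(2*σ)) ≤ (a^2/(2*ρ)) * (2/ρ) :=
          mul_le_mul h1 h2 (by positivity) (by positivity)
      _ = a^2/ρ^2 := by field_simp
  have hb1 : |ρ*((ℓ - y + y^2/2)/(2*σ))| ≤ 64*σ^2/ρ^2 := by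
    rw [abs_mul, abs_of_nonneg hρ0.le, abs_div, abs_of_nonneg (show (0:ℝ) ≤ 2*σ by positivity)]
    have h2 : y^3 ≤ 64*σ^3/ρ^3 := by
      calc y^3 ≤ (4*σ/ρ)^3 := pow_le_pow_left₀ hy0.le hyρ 3
        _ = 64*σ^3/ρ^3 := by ring
    calc ρ * (|ℓ - y + y^2/2|/(2*σ)) ≤ ρ * ((2*y^3)/(2*σ)) := by gcongr
      _ ≤ ρ * ((2*(64*σ^3/ρ^3))/(2*σ)) := by gcongr
      _ = 64*σ^2/ρ^2 := by field_simp
  have hb2 : |ρ*(1/(ρ-(M+σ)) - 1/ρ - (M+σ)/ρ^2)| ≤ 2*(M+σ)^2/ρ^2 := by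
    have hid : ρ*(1/(ρ-(M+σ)) - 1/ρ - (M+σ)/ρ^2) = (M+σ)^2/(ρ*(ρ-(M+σ))) := by
      field_simp; ring
    rw [hid, abs_of_nonneg (div_nonneg (sq_nonneg _) (mul_pos hρ0 hBpos).le),
      div_le_div_iff₀ (mul_pos hρ0 hBpos) (by positivity)]
    nlinarith [mul_nonneg (mul_nonneg (sq_nonneg (M+σ)) hρ0.le)
      (show (0:ℝ) ≤ ρ - 2*(M+σ) by linarith)]
  have hb3 : |ρ*(σ/(ρ-(M+σ))^2 - σ/ρ^2)| ≤ 8*σ*(M+σ)/ρ^2 := by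
    have hid : ρ*(σ/(ρ-(M+σ))^2 - σ/ρ^2)
        = σ*((M+σ)*(2*ρ-(M+σ)))/(ρ*(ρ-(M+σ))^2) := by field_simp; ring
    rw [hid, abs_of_nonneg (div_nonneg (mul_nonneg hσ.le (mul_nonneg (by linarith) (by linarith)))
      (by positivity))]
    rw [div_le_div_iff₀ (by positivity) (by positivity)]
    have hB0 : (0:ℝ) ≤ M+σ := by linarith
    have h8 : 2*ρ^2 ≤ 8*(ρ-(M+σ))^2 := by nlinarith [pow_le_pow_left₀ (by positivity : (0:ℝ) ≤ ρ/2) hhalf 2]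
    nlinarith [mul_le_mul_of_nonneg_left h8 (mul_nonneg (mul_nonneg hσ.le hB0) hρ0.le),
      mul_nonneg (mul_nonneg (mul_nonneg hσ.le hB0) (sq_nonneg ρ)) hB0]
  calc |(s - ρ)*(-(ℓ/(2*σ))) + (-(ρ*((ℓ - y + y^2/2)/(2*σ))))
        + (-(ρ*(1/(ρ-(M+σ)) - 1/ρ - (M+σ)/ρ^2))) + (ρ*(σ/(ρ-(M+σ))^2 - σ/ρ^2))|
      ≤ |(s - ρ)*(-(ℓ/(2*σ)))| + |ρ*((ℓ - y + y^2/2)/(2*σ))|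
        + |ρ*(1/(ρ-(M+σ)) - 1/ρ - (M+σ)/ρ^2)| + |ρ*(σ/(ρ-(M+σ))^2 - σ/ρ^2)| := by
        have t1 := abs_add_le ((s - ρ)*(-(ℓ/(2*σ))) + (-(ρ*((ℓ - y + y^2/2)/(2*σ))))
          + (-(ρ*(1/(ρ-(M+σ)) - 1/ρ - (M+σ)/ρ^2)))) (ρ*(σ/(ρ-(M+σ))^2 - σ/ρ^2))
        have t2 := abs_add_le ((s - ρ)*(-(ℓ/(2*σ))) + (-(ρ*((ℓ - y + y^2/2)/(2*σ)))))
          (-(ρ*(1/(ρ-(M+σ)) - 1/ρ - (M+σ)/ρ^2)))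
        have t3 := abs_add_le ((s - ρ)*(-(ℓ/(2*σ)))) (-(ρ*((ℓ - y + y^2/2)/(2*σ))))
        rw [abs_neg] at t2 t3
        linarith
    _ ≤ a^2/ρ^2 + 64*σ^2/ρ^2 + 2*(M+σ)^2/ρ^2 + 8*σ*(M+σ)/ρ^2 := by
        linarith [hb0, hb1, hb2, hb3]
    _ = (a^2 + 64*σ^2 + 2*(M+σ)^2 + 8*σ*(M+σ)) / ρ^2 := by ring

set_option maxHeartbeats 1000000 in
lemma est_W (M σ a ρ : ℝ) (hM : 0 < M) (hσ : 0 < σ) (hσM : σ ≤ M) (hρ : 8*M+8 ≤ ρ) :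
    |ρ^2 * (ρ / Real.sqrt (ρ^2+a^2) * ((Real.log (ρ-(M+σ)) - Real.log (ρ-(M-σ)))/(2*σ))
        + Real.sqrt (ρ^2+a^2) * ((ρ-(M+σ))*(ρ-(M-σ)))⁻¹) - M|
      ≤ (3*a^2 + 64*σ^2 + 8*M*(M-σ) + 8*σ*(M+σ)) / ρ := by
  have hρ0 : 0 < ρ := by linarith
  have hhalf : ρ/2 ≤ ρ - (M+σ) := by linarith
  have hhalf' : ρ/2 ≤ ρ - (M-σ) := by linarith
  have hBpos : 0 < ρ - (M+σ) := by linarith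
  have hrpos : 0 < ρ - (M-σ) := by linarith
  have hΔpos : 0 < (ρ-(M+σ))*(ρ-(M-σ)) := mul_pos hBpos hrpos
  have hΔ4 : ρ^2/4 ≤ (ρ-(M+σ))*(ρ-(M-σ)) := by nlinarith
  set y := 2*σ/(ρ-(M+σ)) with hy
  have hy0 : 0 < y := by positivity
  have hy2 : y ≤ 1/2 := by rw [hy, div_le_iff₀ hBpos]; linarith
  have hyρ : y ≤ 4*σ/ρ := by rw [hy, div_le_div_iff₀ hBpos hρ0]; nlinarith
  have hmul : ρ - (M-σ) = (ρ-(M+σ))*(1+y) := by rw [hy]; field_simp; ring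
  have hlog : Real.log (ρ-(M-σ)) = Real.log (ρ-(M+σ)) + Real.log (1+y) := by
    rw [hmul, Real.log_mul hBpos.ne' (by positivity)]
  set ℓ := Real.log (1+y) with hℓ
  have hℓ0 : 0 ≤ ℓ := Real.log_nonneg (by linarith)
  have hℓy : ℓ ≤ y := by
    have := Real.log_le_sub_one_of_pos (show (0:ℝ) < 1+y by linarith)
    simpa using this
  have htay : |ℓ - y + y^2/2| ≤ 2*y^3 := log_taylor2 hy0 hy2
  have hℓρ : ℓ * ρ ≤ 4*σ := by
    have h := le_trans hℓy hyρ
    rw [le_div_iff₀ hρ0] at h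
    linarith
  have hℓb : ℓ/(2*σ) ≤ 2/ρ := by
    rw [div_le_div_iff₀ (by positivity) hρ0]; linarith
  have hsl : ρ ≤ Real.sqrt (ρ^2+a^2) := sqrt_lb hρ0.le
  have hsu : Real.sqrt (ρ^2+a^2) ≤ ρ + a^2/(2*ρ) := sqrt_ub hρ0
  set s := Real.sqrt (ρ^2+a^2) with hs
  have hs0 : 0 < s := lt_of_lt_of_le hρ0 hsl
  have hgval : (Real.log (ρ-(M+σ)) - Real.log (ρ-(M-σ)))/(2*σ) = -(ℓ/(2*σ)) := by
    rw [hlog]; ring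
  rw [hgval]
  have hdecomp : ρ^2 * (ρ / s * (-(ℓ/(2*σ))) + s * ((ρ-(M+σ))*(ρ-(M-σ)))⁻¹) - M
      = ρ^2*(ρ/s - 1)*(-(ℓ/(2*σ)))
      + ρ^2*(s-ρ)/((ρ-(M+σ))*(ρ-(M-σ)))
      + (-(ρ^2*((ℓ - y + y^2/2)/(2*σ))))
      + (M-σ)*(2*M*ρ-(M^2-σ^2))/((ρ-(M+σ))*(ρ-(M-σ)))
      + σ*((M+σ)*(2*ρ-(M+σ)))/(ρ-(M+σ))^2 := by
    rw [hy]; field_simp; ring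
  rw [hdecomp]
  have hb1 : |ρ^2*(ρ/s - 1)*(-(ℓ/(2*σ)))| ≤ a^2/ρ := by
    rw [abs_mul, abs_neg, abs_mul, abs_of_nonneg (sq_nonneg ρ),
      abs_of_nonneg (show (0:ℝ) ≤ ℓ/(2*σ) by positivity)]
    have h1 : |ρ/s - 1| ≤ a^2/(2*ρ^2) := by
      have he : ρ/s - 1 = -((s-ρ)/s) := by rw [div_sub_one hs0.ne']; ring
      rw [he, abs_neg, abs_of_nonneg (div_nonneg (by linarith) hs0.le)]
      calc (s-ρ)/s ≤ (a^2/(2*ρ))/ρ := by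
            apply div_le_div₀ (by positivity) (by linarith) hρ0 hsl
        _ = a^2/(2*ρ^2) := by rw [div_div]; ring_nf
    calc ρ^2 * |ρ/s - 1| * (ℓ/(2*σ)) ≤ ρ^2 * (a^2/(2*ρ^2)) * (2/ρ) := by
          apply mul_le_mul (mul_le_mul_of_nonneg_left h1 (sq_nonneg ρ)) hℓb (by positivity)
            (by positivity)
      _ = a^2/ρ := by field_simp
  have hb2 : |ρ^2*(s-ρ)/((ρ-(M+σ))*(ρ-(M-σ)))| ≤ 2*a^2/ρ := by
    rw [abs_div, abs_of_pos hΔpos, abs_mul, abs_of_nonneg (sq_nonneg ρ),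
      abs_of_nonneg (show (0:ℝ) ≤ s-ρ by linarith)]
    calc ρ^2*(s-ρ)/((ρ-(M+σ))*(ρ-(M-σ))) ≤ (ρ^2*(a^2/(2*ρ)))/(ρ^2/4) := by
          apply div_le_div₀ (by positivity) (by nlinarith) (by positivity) hΔ4
      _ = 2*a^2/ρ := by field_simp; ring
  have hb3 : |ρ^2*((ℓ - y + y^2/2)/(2*σ))| ≤ 64*σ^2/ρ := by
    rw [abs_mul, abs_of_nonneg (sq_nonneg ρ), abs_div,
      abs_of_nonneg (show (0:ℝ) ≤ 2*σ by positivity)]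
    have h2 : y^3 ≤ 64*σ^3/ρ^3 := by
      calc y^3 ≤ (4*σ/ρ)^3 := pow_le_pow_left₀ hy0.le hyρ 3
        _ = 64*σ^3/ρ^3 := by ring
    calc ρ^2 * (|ℓ - y + y^2/2|/(2*σ)) ≤ ρ^2 * ((2*y^3)/(2*σ)) := by gcongr
      _ ≤ ρ^2 * ((2*(64*σ^3/ρ^3))/(2*σ)) := by gcongr
      _ = 64*σ^2/ρ := by field_simp
  have hb4 : |(M-σ)*(2*M*ρ-(M^2-σ^2))/((ρ-(M+σ))*(ρ-(M-σ)))| ≤ 8*M*(M-σ)/ρ := by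
    have hnum0 : (0:ℝ) ≤ 2*M*ρ-(M^2-σ^2) := by nlinarith
    rw [abs_div, abs_of_pos hΔpos, abs_of_nonneg (mul_nonneg (by linarith) hnum0)]
    calc (M-σ)*(2*M*ρ-(M^2-σ^2))/((ρ-(M+σ))*(ρ-(M-σ))) ≤ ((M-σ)*(2*M*ρ))/(ρ^2/4) := by
          apply div_le_div₀ (mul_nonneg (by linarith) (by positivity))
            (by nlinarith [mul_nonneg (sub_nonneg.2 hσM) (show (0:ℝ) ≤ M^2 - σ^2 by nlinarith)])
            (by positivity) hΔ4
      _ = 8*M*(M-σ)/ρ := by field_simp; ring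
  have hb5 : |σ*((M+σ)*(2*ρ-(M+σ)))/(ρ-(M+σ))^2| ≤ 8*σ*(M+σ)/ρ := by
    rw [abs_div, abs_of_pos (pow_pos hBpos 2),
      abs_of_nonneg (mul_nonneg hσ.le (mul_nonneg (by linarith) (by linarith)))]
    have hq : ρ^2/4 ≤ (ρ-(M+σ))^2 := by nlinarith
    calc σ*((M+σ)*(2*ρ-(M+σ)))/(ρ-(M+σ))^2 ≤ (σ*((M+σ)*(2*ρ)))/(ρ^2/4) := by
          apply div_le_div₀ (by positivity) (by nlinarith) (by positivity) hq
      _ = 8*σ*(M+σ)/ρ := by field_simp; ring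
  set T1 := ρ^2*(ρ/s - 1)*(-(ℓ/(2*σ)))
  set T2 := ρ^2*(s-ρ)/((ρ-(M+σ))*(ρ-(M-σ)))
  set T3 := ρ^2*((ℓ - y + y^2/2)/(2*σ))
  set T4 := (M-σ)*(2*M*ρ-(M^2-σ^2))/((ρ-(M+σ))*(ρ-(M-σ)))
  set T5 := σ*((M+σ)*(2*ρ-(M+σ)))/(ρ-(M+σ))^2
  calc |T1 + T2 + -T3 + T4 + T5| ≤ |T1| + |T2| + |T3| + |T4| + |T5| := by
        have t1 := abs_add_le (T1 + T2 + -T3 + T4) T5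
        have t2 := abs_add_le (T1 + T2 + -T3) T4
        have t3 := abs_add_le (T1 + T2) (-T3)
        have t4 := abs_add_le T1 T2
        rw [abs_neg] at t3
        linarith
    _ ≤ a^2/ρ + 2*a^2/ρ + 64*σ^2/ρ + 8*M*(M-σ)/ρ + 8*σ*(M+σ)/ρ := by
        linarith [hb1, hb2, hb3, hb4, hb5]
    _ = (3*a^2 + 64*σ^2 + 8*M*(M-σ) + 8*σ*(M+σ)) / ρ := by ring

set_option maxHeartbeats 1000000 in
/-- **Large-`r` asymptotics of the time-inverted `ℓ = 0` mode.**
Let `Δ(ρ) = (ρ-r₊)(ρ-r₋) = ρ² - 2Mρ + a²`, let `G` be continuous and compactly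
supported on `[r₊,∞)`, `Q = ∫_{r₊}^∞ G`, and
`ψ(ρ) = -∫_ρ^∞ Δ(ρ₁)⁻¹ ∫_{r₊}^{ρ₁} G(ρ₂) dρ₂ dρ₁`. Then as `ρ → ∞`:
the limit term `lim ρ' G(ρ')` vanishes,
`√(ρ²+a²) ψ(ρ) = -Q(1 + M/ρ) + O(ρ⁻²)`,
`ρ² d/dρ(√(ρ²+a²) ψ)(ρ) = MQ + O(ρ⁻¹)`, and in particular
`lim_{ρ→∞} ρ² d/dρ(√(ρ²+a²) ψ) = MQ`. -/
theorem ell0_time_inversion_asymptotics (M a : ℝ) (hM : 0 < M) (ha : |a| < M)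
    (G : ℝ → ℝ) (hGc : Continuous G) (hGs : HasCompactSupport G)
    (Q : ℝ) (hQ : Q = ∫ ρ in Set.Ioi (M + Real.sqrt (M ^ 2 - a ^ 2)), G ρ)
    (ψ : ℝ → ℝ)
    (hψ : ∀ ρ, M + Real.sqrt (M ^ 2 - a ^ 2) < ρ →
      ψ ρ = -∫ ρ₁ in Set.Ioi ρ, (ρ₁ ^ 2 - 2 * M * ρ₁ + a ^ 2)⁻¹ *
        ∫ ρ₂ in (M + Real.sqrt (M ^ 2 - a ^ 2))..ρ₁, G ρ₂) :
    Tendsto (fun ρ => ρ * G ρ) atTop (nhds 0) ∧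
    (∃ C R, ∀ ρ ≥ R,
      |Real.sqrt (ρ ^ 2 + a ^ 2) * ψ ρ - (-Q * (1 + M / ρ))| ≤ C / ρ ^ 2) ∧
    (∃ C R, ∀ ρ ≥ R,
      |ρ ^ 2 * deriv (fun s => Real.sqrt (s ^ 2 + a ^ 2) * ψ s) ρ - M * Q| ≤ C / ρ) ∧
    Tendsto (fun ρ => ρ ^ 2 * deriv (fun s => Real.sqrt (s ^ 2 + a ^ 2) * ψ s) ρ)
      atTop (nhds (M * Q)) := by
  have ha2 : a ^ 2 < M ^ 2 := by nlinarith [sq_abs a, abs_nonneg a]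
  set σ := Real.sqrt (M ^ 2 - a ^ 2) with hσdef
  have hσ0 : 0 < σ := Real.sqrt_pos.2 (by linarith)
  have hσsq : σ ^ 2 = M ^ 2 - a ^ 2 := Real.sq_sqrt (by linarith)
  have hσM : σ ≤ M := by nlinarith [sq_nonneg a]
  -- support bound
  obtain ⟨R₂, hR₂⟩ := (hGs : IsCompact (tsupport G)).isBounded.subset_closedBall 0
  set R₀ := max (M + σ + 1) (R₂ + 1) with hR₀def
  have hR₀B : M + σ < R₀ := lt_of_lt_of_le (by linarith) (le_max_left _ _)
  have hR₀pos : 0 < R₀ := by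
    have : (0:ℝ) < M + σ + 1 := by linarith
    exact lt_of_lt_of_le this (le_max_left _ _)
  have hGz : ∀ x, R₀ ≤ x → G x = 0 := by
    intro x hx
    apply image_eq_zero_of_notMem_tsupport
    intro hmem
    have hball := hR₂ hmem
    rw [Metric.mem_closedBall, Real.dist_eq, sub_zero] at hball
    have h1 : R₂ + 1 ≤ x := le_trans (le_max_right _ _) hx
    linarith [le_abs_self x]
  have hGint : Integrable G := hGc.integrable_of_hasCompactSupport hGs
  -- bullet 1
  have bullet1 : Tendsto (fun ρ => ρ * G ρ) atTop (nhds 0) := by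
    apply Tendsto.congr' _ (tendsto_const_nhds (x := (0:ℝ)))
    filter_upwards [eventually_ge_atTop R₀] with x hx
    rw [hGz x hx, mul_zero]
  -- psi formula
  have hψf : ∀ ρ, R₀ ≤ ρ →
      ψ ρ = Q * ((Real.log (ρ - (M + σ)) - Real.log (ρ - (M - σ))) / (2 * σ)) := by
    intro ρ hρ
    have hfact : ∀ x : ℝ, (x ^ 2 - 2 * M * x + a ^ 2)⁻¹ = ((x - (M + σ)) * (x - (M - σ)))⁻¹ := by
      intro x; congr 1; linear_combination hσsq
    rw [hψ ρ (lt_of_lt_of_le hR₀B hρ)]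
    simp only [hfact]
    rw [psi_formula (M + σ) (M - σ) (by linarith) G hGint R₀ hR₀B hGz ρ hρ,
      show M + σ - (M - σ) = 2 * σ by ring, ← hQ]
  set R₁ := max (R₀ + 1) (8 * M + 8) with hR₁def
  -- bullet 2
  have bullet2 : ∀ ρ ≥ R₁,
      |Real.sqrt (ρ ^ 2 + a ^ 2) * ψ ρ - (-Q * (1 + M / ρ))|
        ≤ (|Q| * (a^2 + 64*σ^2 + 2*(M+σ)^2 + 8*σ*(M+σ))) / ρ ^ 2 := by
    intro ρ hρ
    have hρ8 : 8 * M + 8 ≤ ρ := le_trans (le_max_right _ _) hρ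
    have hρ0 : R₀ ≤ ρ := le_trans (le_trans (by linarith) (le_max_left (R₀+1) (8*M+8))) hρ
    rw [hψf ρ hρ0]
    have hest := est_val M σ a ρ hM hσ0 hσM hρ8
    calc |Real.sqrt (ρ^2+a^2) * (Q * ((Real.log (ρ-(M+σ)) - Real.log (ρ-(M-σ)))/(2*σ)))
          - (-Q*(1+M/ρ))|
        = |Q| * |Real.sqrt (ρ^2+a^2) * ((Real.log (ρ-(M+σ)) - Real.log (ρ-(M-σ)))/(2*σ))
            + (1+M/ρ)| := by
          rw [← abs_mul]; congr 1; ring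
      _ ≤ |Q| * ((a^2 + 64*σ^2 + 2*(M+σ)^2 + 8*σ*(M+σ)) / ρ^2) :=
          mul_le_mul_of_nonneg_left hest (abs_nonneg Q)
      _ = (|Q| * (a^2 + 64*σ^2 + 2*(M+σ)^2 + 8*σ*(M+σ))) / ρ^2 := by ring
  -- derivative formula
  have hderivF : ∀ ρ, R₀ < ρ →
      deriv (fun s => Real.sqrt (s ^ 2 + a ^ 2) * ψ s) ρ
        = 2*ρ/(2*Real.sqrt (ρ^2+a^2))
            * (Q * ((Real.log (ρ-(M+σ)) - Real.log (ρ-(M-σ)))/(2*σ)))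
          + Real.sqrt (ρ^2+a^2) * (Q * ((1/(ρ-(M+σ)) - 1/(ρ-(M-σ)))/(2*σ))) := by
    intro ρ hρ
    have hρpos : 0 < ρ := lt_trans hR₀pos hρ
    have hxB : (0:ℝ) < ρ - (M+σ) := by have := lt_trans hR₀B hρ; linarith
    have hxr : (0:ℝ) < ρ - (M-σ) := by have := lt_trans hR₀B hρ; linarith
    have hsq : (0:ℝ) < ρ^2 + a^2 := by positivity
    have h1 : HasDerivAt (fun x : ℝ => x ^ 2 + a ^ 2) (2*ρ) ρ := by
      simpa using (hasDerivAt_pow 2 ρ).add_const (a ^ 2)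
    have hsqrt : HasDerivAt (fun x => Real.sqrt (x ^ 2 + a ^ 2))
        (2*ρ/(2*Real.sqrt (ρ^2+a^2))) ρ := h1.sqrt hsq.ne'
    have hl1 : HasDerivAt (fun y : ℝ => Real.log (y - (M+σ))) (1/(ρ-(M+σ))) ρ :=
      ((hasDerivAt_id ρ).sub_const (M+σ)).log hxB.ne'
    have hl2 : HasDerivAt (fun y : ℝ => Real.log (y - (M-σ))) (1/(ρ-(M-σ))) ρ :=
      ((hasDerivAt_id ρ).sub_const (M-σ)).log hxr.ne'
    have hg : HasDerivAt
        (fun x => Q * ((Real.log (x-(M+σ)) - Real.log (x-(M-σ)))/(2*σ)))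
        (Q * ((1/(ρ-(M+σ)) - 1/(ρ-(M-σ)))/(2*σ))) ρ :=
      ((hl1.sub hl2).div_const (2*σ)).const_mul Q
    have hF := hsqrt.mul hg
    have heq : (fun s => Real.sqrt (s ^ 2 + a ^ 2) * ψ s) =ᶠ[nhds ρ]
        (fun s => Real.sqrt (s ^ 2 + a ^ 2)
          * (Q * ((Real.log (s-(M+σ)) - Real.log (s-(M-σ)))/(2*σ)))) := by
      filter_upwards [Ioi_mem_nhds hρ] with x hx
      rw [hψf x (le_of_lt hx)]
    rw [heq.deriv_eq]; exact hF.deriv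
  -- bullet 3
  have bullet3 : ∀ ρ ≥ R₁,
      |ρ ^ 2 * deriv (fun s => Real.sqrt (s ^ 2 + a ^ 2) * ψ s) ρ - M * Q|
        ≤ (|Q| * (3*a^2 + 64*σ^2 + 8*M*(M-σ) + 8*σ*(M+σ))) / ρ := by
    intro ρ hρ
    have hρ8 : 8*M+8 ≤ ρ := le_trans (le_max_right _ _) hρ
    have hρR₀ : R₀ < ρ := lt_of_lt_of_le (lt_add_one R₀) (le_trans (le_max_left _ _) hρ)
    rw [hderivF ρ hρR₀]
    have hρpos : (0:ℝ) < ρ := by linarith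
    have hxB : (0:ℝ) < ρ - (M+σ) := by linarith [lt_trans hR₀B hρR₀]
    have hxr : (0:ℝ) < ρ - (M-σ) := by linarith [lt_trans hR₀B hρR₀]
    have hs0 : (0:ℝ) < Real.sqrt (ρ^2+a^2) := Real.sqrt_pos.2 (by positivity)
    have hid : ρ ^ 2 * (2*ρ/(2*Real.sqrt (ρ^2+a^2))
            * (Q * ((Real.log (ρ-(M+σ)) - Real.log (ρ-(M-σ)))/(2*σ)))
          + Real.sqrt (ρ^2+a^2) * (Q * ((1/(ρ-(M+σ)) - 1/(ρ-(M-σ)))/(2*σ)))) - M * Q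
        = Q * (ρ^2 * (ρ / Real.sqrt (ρ^2+a^2)
            * ((Real.log (ρ-(M+σ)) - Real.log (ρ-(M-σ)))/(2*σ))
          + Real.sqrt (ρ^2+a^2) * ((ρ-(M+σ))*(ρ-(M-σ)))⁻¹) - M) := by
      field_simp
      ring
    rw [hid, abs_mul]
    have hest := est_W M σ a ρ hM hσ0 hσM hρ8
    calc |Q| * |ρ^2 * (ρ / Real.sqrt (ρ^2+a^2)
            * ((Real.log (ρ-(M+σ)) - Real.log (ρ-(M-σ)))/(2*σ))
          + Real.sqrt (ρ^2+a^2) * ((ρ-(M+σ))*(ρ-(M-σ)))⁻¹) - M|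
        ≤ |Q| * ((3*a^2 + 64*σ^2 + 8*M*(M-σ) + 8*σ*(M+σ)) / ρ) :=
          mul_le_mul_of_nonneg_left hest (abs_nonneg Q)
      _ = (|Q| * (3*a^2 + 64*σ^2 + 8*M*(M-σ) + 8*σ*(M+σ))) / ρ := by ring
  -- bullet 4
  have bullet4 : Tendsto (fun ρ => ρ ^ 2 * deriv (fun s => Real.sqrt (s ^ 2 + a ^ 2) * ψ s) ρ)
      atTop (nhds (M * Q)) := by
    have h0 : Tendsto (fun ρ : ℝ =>
        (|Q| * (3*a^2 + 64*σ^2 + 8*M*(M-σ) + 8*σ*(M+σ))) / ρ) atTop (nhds 0) :=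
      Tendsto.div_atTop tendsto_const_nhds tendsto_id
    have h1 : Tendsto (fun ρ =>
        ρ ^ 2 * deriv (fun s => Real.sqrt (s ^ 2 + a ^ 2) * ψ s) ρ - M * Q) atTop (nhds 0) := by
      apply squeeze_zero_norm' _ h0
      filter_upwards [eventually_ge_atTop R₁] with x hx
      simpa [Real.norm_eq_abs] using bullet3 x hx
    simpa using h1.add_const (M * Q)
  exact ⟨bullet1, ⟨_, R₁, bullet2⟩, ⟨_, R₁, bullet3⟩, bullet4⟩
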